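/- If a_{ij} > 0 for all 1 ≤ i,j ≤ m and c ∈ S^{m-1} with c_i > 0 for all i, then the powers B_c^n converge as n → ∞ to a rank-one projection: there exists a vector w ∈ ℝ^m with w positive and Σ_{i=1}^m w_i c_i = 1 such that lim_{n→∞} B_c^n = c w^T (entrywise convergence of matrices); consequently, for every u^{(0)} ∈ ℝ^m, lim_{n→∞} B_c^n (u^{(0)})^T = (w · u^{(0)}) c^T. -/

import Mathlib

open Finset Matrix Filter

section Aux

variable {m : ℕ}

lemma rowsum_pow {P : Matrix (Fin m) (Fin m) ℝ} (hP : ∀ i, ∑ k, P i k = 1) :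
    ∀ n : ℕ, ∀ i, ∑ k, (P ^ n) i k = 1 := by
  intro n
  induction n with
  | zero => intro i; simp [Matrix.one_apply]
  | succ n ih =>
      intro i
      rw [pow_succ']
      simp only [Matrix.mul_apply]
      rw [Finset.sum_comm]
      have : ∀ j : Fin m, ∑ k, P i j * (P ^ n) j k = P i j := by
        intro j; rw [← Finset.mul_sum, ih j, mul_one]
      rw [Finset.sum_congr rfl (fun j _ => this j), hP]

lemma entry_upper (hne : (univ : Finset (Fin m)).Nonempty)
    {P : Matrix (Fin m) (Fin m) ℝ} {ε : ℝ} (hε : 0 < ε)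
    (hPl : ∀ i k, ε ≤ P i k) (hrow : ∀ i, ∑ k, P i k = 1)
    (x : Fin m → ℝ) (i : Fin m) :
    (P *ᵥ x) i ≤ ε * univ.inf' hne x + (1 - ε) * univ.sup' hne x := by
  obtain ⟨k0, -, hk0⟩ := Finset.exists_mem_eq_inf' hne x
  have hM : ∀ k : Fin m, x k ≤ univ.sup' hne x := fun k => Finset.le_sup' x (mem_univ k)
  have hsplit : (P *ᵥ x) i = P i k0 * x k0 + ∑ k ∈ univ.erase k0, P i k * x k := by
    simp only [Matrix.mulVec, dotProduct]
    exact (Finset.add_sum_erase _ (fun k => P i k * x k) (mem_univ k0)).symm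
  have hrest : ∑ k ∈ univ.erase k0, P i k * x k
      ≤ (1 - P i k0) * univ.sup' hne x := by
    have h1 : ∑ k ∈ univ.erase k0, P i k * x k
        ≤ ∑ k ∈ univ.erase k0, P i k * univ.sup' hne x := by
      refine Finset.sum_le_sum fun k _ => ?_
      exact mul_le_mul_of_nonneg_left (hM k) (le_trans hε.le (hPl i k))
    have h2 : ∑ k ∈ univ.erase k0, P i k = 1 - P i k0 := by
      rw [Finset.sum_erase_eq_sub (mem_univ k0), hrow i]
    rw [← Finset.sum_mul, h2] at h1
    exact h1
  have hdiag : P i k0 * x k0 ≤ ε * x k0 + (P i k0 - ε) * univ.sup' hne x := by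
    have := hM k0
    have := hPl i k0
    nlinarith
  rw [hsplit]
  nlinarith [hk0, hdiag, hrest]

lemma entry_lower (hne : (univ : Finset (Fin m)).Nonempty)
    {P : Matrix (Fin m) (Fin m) ℝ} {ε : ℝ} (hε : 0 < ε)
    (hPl : ∀ i k, ε ≤ P i k) (hrow : ∀ i, ∑ k, P i k = 1)
    (x : Fin m → ℝ) (i : Fin m) :
    ε * univ.sup' hne x + (1 - ε) * univ.inf' hne x ≤ (P *ᵥ x) i := by
  obtain ⟨k1, -, hk1⟩ := Finset.exists_mem_eq_sup' hne x
  have hM : ∀ k : Fin m, univ.inf' hne x ≤ x k := fun k => Finset.inf'_le x (mem_univ k)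
  have hsplit : (P *ᵥ x) i = P i k1 * x k1 + ∑ k ∈ univ.erase k1, P i k * x k := by
    simp only [Matrix.mulVec, dotProduct]
    exact (Finset.add_sum_erase _ (fun k => P i k * x k) (mem_univ k1)).symm
  have hrest : (1 - P i k1) * univ.inf' hne x
      ≤ ∑ k ∈ univ.erase k1, P i k * x k := by
    have h1 : ∑ k ∈ univ.erase k1, P i k * univ.inf' hne x
        ≤ ∑ k ∈ univ.erase k1, P i k * x k := by
      refine Finset.sum_le_sum fun k _ => ?_
      exact mul_le_mul_of_nonneg_left (hM k) (le_trans hε.le (hPl i k))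
    have h2 : ∑ k ∈ univ.erase k1, P i k = 1 - P i k1 := by
      rw [Finset.sum_erase_eq_sub (mem_univ k1), hrow i]
    rw [← Finset.sum_mul, h2] at h1
    exact h1
  have hdiag : ε * x k1 + (P i k1 - ε) * univ.inf' hne x ≤ P i k1 * x k1 := by
    have := hM k1
    have := hPl i k1
    nlinarith
  rw [hsplit]
  nlinarith [hk1, hdiag, hrest]

/-- Main convergence lemma for powers of a positive stochastic matrix applied to a vector. -/
lemma key_conv (hne : (univ : Finset (Fin m)).Nonempty)
    {P : Matrix (Fin m) (Fin m) ℝ} {ε : ℝ} (hε : 0 < ε) (hδ : 2 * ε ≤ 1)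
    (hPl : ∀ i k, ε ≤ P i k) (hrow : ∀ i, ∑ k, P i k = 1) (x : Fin m → ℝ) :
    ∃ L : ℝ, (∀ i, Tendsto (fun n : ℕ => ((P ^ n) *ᵥ x) i) atTop (nhds L)) ∧
      ∀ n : ℕ, univ.inf' hne (fun i => ((P ^ n) *ᵥ x) i) ≤ L := by
  set f : ℕ → Fin m → ℝ := fun n => (P ^ n) *ᵥ x with hf
  have hstep : ∀ n, f (n + 1) = P *ᵥ f n := by
    intro n
    rw [hf]
    simp only
    rw [Matrix.mulVec_mulVec, ← pow_succ']
  set mseq : ℕ → ℝ := fun n => univ.inf' hne (f n) with hmseq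
  set Mseq : ℕ → ℝ := fun n => univ.sup' hne (f n) with hMseq
  have hmM : ∀ n, mseq n ≤ Mseq n := by
    intro n
    obtain ⟨i, -⟩ := hne
    exact le_trans (Finset.inf'_le _ (mem_univ i)) (Finset.le_sup' _ (mem_univ i))
  have hmono : Monotone mseq := by
    refine monotone_nat_of_le_succ fun n => ?_
    refine Finset.le_inf' hne _ fun i _ => ?_
    rw [hstep n]
    have := entry_lower hne hε hPl hrow (f n) i
    have h2 : ε * Mseq n + (1 - ε) * mseq n ≥ mseq n := by nlinarith [hmM n]
    linarith
  have hanti : Antitone Mseq := by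
    refine antitone_nat_of_succ_le fun n => ?_
    refine Finset.sup'_le hne _ fun i _ => ?_
    rw [hstep n]
    have := entry_upper hne hε hPl hrow (f n) i
    have h2 : ε * mseq n + (1 - ε) * Mseq n ≤ Mseq n := by nlinarith [hmM n]
    linarith
  have hbdd : ∀ n, mseq n ≤ Mseq 0 := fun n => le_trans (hmM n) (hanti (Nat.zero_le n))
  have hbdd' : BddAbove (Set.range mseq) := by
    refine ⟨Mseq 0, ?_⟩
    rintro y ⟨n, rfl⟩
    exact hbdd n
  set L : ℝ := ⨆ n, mseq n with hL
  have hmlim : Tendsto mseq atTop (nhds L) := tendsto_atTop_ciSup hmono hbdd'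
  have hLn : ∀ n, mseq n ≤ L := fun n => le_ciSup hbdd' n
  have hosc : ∀ n, Mseq n - mseq n ≤ (1 - 2 * ε) ^ n * (Mseq 0 - mseq 0) := by
    intro n
    induction n with
    | zero => simp
    | succ n ih =>
        have hcontr : Mseq (n + 1) - mseq (n + 1) ≤ (1 - 2 * ε) * (Mseq n - mseq n) := by
          obtain ⟨i, -, hi⟩ := Finset.exists_mem_eq_sup' hne (f (n + 1))
          obtain ⟨j, -, hj⟩ := Finset.exists_mem_eq_inf' hne (f (n + 1))
          have hup : f (n + 1) i ≤ ε * mseq n + (1 - ε) * Mseq n := by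
            rw [hstep n]; exact entry_upper hne hε hPl hrow (f n) i
          have hlo : ε * Mseq n + (1 - ε) * mseq n ≤ f (n + 1) j := by
            rw [hstep n]; exact entry_lower hne hε hPl hrow (f n) j
          rw [hMseq, hmseq]
          simp only
          rw [hi, hj]
          linarith
        have h0 : (0 : ℝ) ≤ 1 - 2 * ε := by linarith
        calc Mseq (n + 1) - mseq (n + 1) ≤ (1 - 2 * ε) * (Mseq n - mseq n) := hcontr
          _ ≤ (1 - 2 * ε) * ((1 - 2 * ε) ^ n * (Mseq 0 - mseq 0)) :=
              mul_le_mul_of_nonneg_left ih h0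
          _ = (1 - 2 * ε) ^ (n + 1) * (Mseq 0 - mseq 0) := by ring
  have hosc0 : Tendsto (fun n => Mseq n - mseq n) atTop (nhds 0) := by
    have hpow : Tendsto (fun n : ℕ => (1 - 2 * ε) ^ n * (Mseq 0 - mseq 0)) atTop (nhds 0) := by
      have := (tendsto_pow_atTop_nhds_zero_of_lt_one (by linarith : (0:ℝ) ≤ 1 - 2 * ε)
        (by linarith : (1 : ℝ) - 2 * ε < 1)).mul_const (Mseq 0 - mseq 0)
      simpa using this
    refine tendsto_of_tendsto_of_tendsto_of_le_of_le tendsto_const_nhds hpow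
      (fun n => by linarith [hmM n]) (fun n => hosc n)
  have hMlim : Tendsto Mseq atTop (nhds L) := by
    have : Tendsto (fun n => mseq n + (Mseq n - mseq n)) atTop (nhds (L + 0)) :=
      hmlim.add hosc0
    simpa using this
  refine ⟨L, fun i => ?_, hLn⟩
  refine tendsto_of_tendsto_of_tendsto_of_le_of_le hmlim hMlim
    (fun n => Finset.inf'_le _ (mem_univ i)) (fun n => Finset.le_sup' _ (mem_univ i))

end Aux

/-- The matrix `B_c` with `b_{ii} = 1 - ∑_{j≠i} a_{ij} c_j` and `b_{ik} = c_i a_{ik}` for `i ≠ k`. -/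
noncomputable def Bmat {m : ℕ} (a : Fin m → Fin m → ℝ) (c : Fin m → ℝ) :
    Matrix (Fin m) (Fin m) ℝ :=
  Matrix.of fun i k =>
    if i = k then 1 - ∑ j ∈ Finset.univ.erase i, a i j * c j else c i * a i k

/-- The powers `B_c^n` converge to the Perron projection `c wᵀ`, a rank-one matrix;
consequently `B_c^n u⁰ → (w · u⁰) c`. -/
theorem stmt_15 {m : ℕ} (hm : 2 ≤ m) (a : Fin m → Fin m → ℝ)
    (ha : ∀ i j, a i j ∈ Set.Icc (0 : ℝ) 1) (hapos : ∀ i j, 0 < a i j)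
    (c : Fin m → ℝ) (hc : c ∈ stdSimplex ℝ (Fin m)) (hcpos : ∀ i, 0 < c i) :
    ∃ w : Fin m → ℝ, (∀ i, 0 < w i) ∧ (∑ i, w i * c i = 1) ∧
      Tendsto (fun n : ℕ => (Bmat a c) ^ n) atTop
        (nhds (Matrix.of fun i k => c i * w k)) ∧
      ∀ u0 : Fin m → ℝ,
        Tendsto (fun n : ℕ => ((Bmat a c) ^ n) *ᵥ u0) atTop
          (nhds fun i => (∑ k, w k * u0 k) * c i) := by
  have hm0 : 0 < m := by omega
  have hne : (univ : Finset (Fin m)).Nonempty := ⟨⟨0, hm0⟩, mem_univ _⟩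
  have hc1 : ∑ x, c x = 1 := hc.2
  set B := Bmat a c with hB
  have hBdef : ∀ i k, B i k =
      if i = k then 1 - ∑ j ∈ Finset.univ.erase i, a i j * c j else c i * a i k :=
    fun i k => rfl
  -- positivity of B
  have hBpos : ∀ i k, 0 < B i k := by
    intro i k
    rw [hBdef]
    by_cases h : i = k
    · subst h
      rw [if_pos rfl]
      have h1 : ∑ j ∈ univ.erase i, a i j * c j ≤ ∑ j ∈ univ.erase i, c j := by
        refine Finset.sum_le_sum fun j _ => ?_
        exact mul_le_of_le_one_left (hc.1 j) (ha i j).2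
      have h2 : ∑ j ∈ univ.erase i, c j = 1 - c i := by
        rw [Finset.sum_erase_eq_sub (mem_univ i), hc1]
      have := hcpos i
      linarith
    · simp only [if_neg h]
      exact mul_pos (hcpos i) (hapos i k)
  -- row identity: B *ᵥ c = c
  have hBrow : ∀ i, ∑ k, B i k * c k = c i := by
    intro i
    rw [← Finset.add_sum_erase _ (fun k => B i k * c k) (mem_univ i)]
    have h1 : ∑ k ∈ univ.erase i, B i k * c k
        = c i * ∑ k ∈ univ.erase i, a i k * c k := by
      rw [Finset.mul_sum]
      refine Finset.sum_congr rfl fun k hk => ?_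
      have hik : i ≠ k := (Finset.ne_of_mem_erase hk).symm
      rw [hBdef, if_neg hik]; ring
    rw [h1, hBdef, if_pos rfl]
    ring
  -- the stochastic conjugate P
  set P : Matrix (Fin m) (Fin m) ℝ := Matrix.of (fun i k => B i k * c k / c i) with hPmat
  have hPdef : ∀ i k, P i k = B i k * c k / c i := fun i k => rfl
  have hProw : ∀ i, ∑ k, P i k = 1 := by
    intro i
    simp only [hPdef]
    rw [← Finset.sum_div, hBrow, div_self (hcpos i).ne']
  have hPpos : ∀ i k, 0 < P i k := by
    intro i k
    rw [hPdef]
    exact div_pos (mul_pos (hBpos i k) (hcpos k)) (hcpos i)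
  have hne2 : (univ : Finset (Fin m × Fin m)).Nonempty := ⟨(⟨0, hm0⟩, ⟨0, hm0⟩), mem_univ _⟩
  set ε : ℝ := univ.inf' hne2 (fun q : Fin m × Fin m => P q.1 q.2) with hε
  have hεpos : 0 < ε := by
    rw [hε, Finset.lt_inf'_iff]
    exact fun b _ => hPpos b.1 b.2
  have hεle : ∀ i k, ε ≤ P i k := fun i k =>
    Finset.inf'_le (fun q : Fin m × Fin m => P q.1 q.2) (mem_univ (i, k))
  have hδ : 2 * ε ≤ 1 := by
    set i0 : Fin m := ⟨0, hm0⟩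
    have h1 : ∑ k, ε ≤ ∑ k, P i0 k := Finset.sum_le_sum fun k _ => hεle i0 k
    rw [hProw i0] at h1
    have h2 : ∑ _k : Fin m, ε = (m : ℝ) * ε := by
      rw [Finset.sum_const, Finset.card_univ, Fintype.card_fin, nsmul_eq_mul]
    rw [h2] at h1
    have hm2 : (2 : ℝ) ≤ (m : ℝ) := by exact_mod_cast hm
    nlinarith
  -- relation between powers of B and P
  have hrel : ∀ n : ℕ, ∀ i k, (B ^ n) i k = c i * (P ^ n) i k / c k := by
    intro n
    induction n with
    | zero =>
        intro i k
        by_cases h : i = k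
        · subst h
          simp only [pow_zero, Matrix.one_apply_eq]
          rw [mul_one, div_self (hcpos i).ne']
        · simp [pow_zero, Matrix.one_apply_ne h]
    | succ n ih =>
        intro i k
        rw [pow_succ', pow_succ']
        simp only [Matrix.mul_apply]
        rw [Finset.mul_sum, Finset.sum_div]
        refine Finset.sum_congr rfl fun j _ => ?_
        rw [ih j k, hPdef]
        have h1 := (hcpos i).ne'
        have h2 := (hcpos j).ne'
        have h3 := (hcpos k).ne'
        field_simp
  -- the limiting vector
  have hconv : ∀ k : Fin m, ∃ L : ℝ,
      (∀ i, Tendsto (fun n : ℕ => ((P ^ n) *ᵥ Pi.single k 1) i) atTop (nhds L)) ∧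
      ∀ n : ℕ, univ.inf' hne (fun i => ((P ^ n) *ᵥ Pi.single k 1) i) ≤ L :=
    fun k => key_conv hne hεpos hδ hεle hProw (Pi.single k 1)
  set q : Fin m → ℝ := fun k => (hconv k).choose with hqdef
  have hsingle : ∀ (M : Matrix (Fin m) (Fin m) ℝ) (i k : Fin m),
      (M *ᵥ Pi.single k 1) i = M i k := by
    intro M i k
    simp [Matrix.mulVec, dotProduct, Pi.single_apply, mul_ite]
  have hq : ∀ k i, Tendsto (fun n : ℕ => (P ^ n) i k) atTop (nhds (q k)) := by
    intro k i
    have h := (hconv k).choose_spec.1 i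
    have h' : Tendsto (fun n : ℕ => (P ^ n) i k) atTop (nhds ((hconv k).choose)) := by
      simpa only [hsingle] using h
    exact h'
  have hqpos : ∀ k, ε ≤ q k := by
    intro k
    have h1 := (hconv k).choose_spec.2 1
    refine le_trans ?_ h1
    refine Finset.le_inf' hne _ fun i _ => ?_
    rw [hsingle, pow_one]
    exact hεle i k
  have hqsum : ∑ k, q k = 1 := by
    set i0 : Fin m := ⟨0, hm0⟩
    have h1 : Tendsto (fun n : ℕ => ∑ k, (P ^ n) i0 k) atTop (nhds (∑ k, q k)) :=
      tendsto_finset_sum _ fun k _ => hq k i0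
    have h2 : (fun n : ℕ => ∑ k, (P ^ n) i0 k) = fun _ => (1 : ℝ) :=
      funext fun n => rowsum_pow hProw n i0
    rw [h2] at h1
    exact (tendsto_nhds_unique tendsto_const_nhds h1).symm
  refine ⟨fun k => q k / c k, ?_, ?_, ?_, ?_⟩
  · exact fun k => div_pos (lt_of_lt_of_le hεpos (hqpos k)) (hcpos k)
  · rw [Finset.sum_congr rfl fun k _ => div_mul_cancel₀ (q k) (hcpos k).ne']
    exact hqsum
  · -- matrix convergence
    refine tendsto_pi_nhds.2 ?_
    intro i
    refine tendsto_pi_nhds.2 ?_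
    intro k
    have h1 : (fun n : ℕ => (B ^ n) i k) = fun n => c i * (P ^ n) i k / c k :=
      funext fun n => hrel n i k
    show Tendsto (fun n : ℕ => (B ^ n) i k) atTop (nhds (c i * (q k / c k)))
    rw [h1, ← mul_div_assoc]
    exact ((hq k i).const_mul (c i)).div_const (c k)
  · -- mulVec convergence
    intro u0
    rw [tendsto_pi_nhds]
    intro i
    have hterm : ∀ k : Fin m, Tendsto (fun n : ℕ => (B ^ n) i k * u0 k) atTop
        (nhds (c i * (q k / c k) * u0 k)) := by
      intro k
      have h1 : (fun n : ℕ => (B ^ n) i k) = fun n => c i * (P ^ n) i k / c k :=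
        funext fun n => hrel n i k
      have h2 : Tendsto (fun n : ℕ => (B ^ n) i k) atTop (nhds (c i * (q k / c k))) := by
        rw [h1, ← mul_div_assoc]
        exact ((hq k i).const_mul (c i)).div_const (c k)
      exact h2.mul_const (u0 k)
    have h3 : Tendsto (fun n : ℕ => ∑ k, (B ^ n) i k * u0 k) atTop
        (nhds (∑ k, c i * (q k / c k) * u0 k)) :=
      tendsto_finset_sum _ fun k _ => hterm k
    have h4 : ∑ k, c i * (q k / c k) * u0 k = (∑ k, q k / c k * u0 k) * c i := by
      rw [Finset.sum_mul]
      exact Finset.sum_congr rfl fun k _ => by ring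
    rw [h4] at h3
    have h5 : (fun n : ℕ => ((B ^ n) *ᵥ u0) i) = fun n : ℕ => ∑ k, (B ^ n) i k * u0 k := by
      funext n
      simp [Matrix.mulVec, dotProduct]
    rw [h5]
    exact h3
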